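/- arXiv:2208.10549 — 2 statements merged into one kernel-verified Lean document; each statement's English description precedes it below -/
import Mathlib

section
/- Let R₁ ∈ ℝ^{n×n} be symmetric positive definite, let d_m > 0, let τ ∈ [0, d_m], let t ∈ ℝ, and let Z : ℝ → ℝⁿ be continuously differentiable. Then d_m · ∫_{t−d_m}^{t} Ż(s)ᵀ R₁ Ż(s) ds ≥ (Z(t) − Z(t−τ))ᵀ R₁ (Z(t) − Z(t−τ)) + (Z(t−τ) − Z(t−d_m))ᵀ R₁ (Z(t−τ) − Z(t−d_m)). Equivalently, −d_m · ∫_{t−d_m}^{t} Ż(s)ᵀ R₁ Ż(s) ds ≤ ξᵀ M ξ, where ξ = (Z(t), Z(t−d_m), Z(t−τ)) ∈ ℝ^{3n} and M is the symmetric 3×3 block matrix with diagonal blocks −R₁, −R₁, −2R₁, blocks M_{13} = M_{23} = R₁, and M_{12} = 0. -/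
open Matrix intervalIntegral

lemma dot_mulVec_integral {n : ℕ} (R : Matrix (Fin n) (Fin n) ℝ) (v : Fin n → ℝ)
    {a b : ℝ} {f : ℝ → Fin n → ℝ} (hf : Continuous f) :
    (∫ s in a..b, v ⬝ᵥ (R *ᵥ f s)) = v ⬝ᵥ (R *ᵥ ∫ s in a..b, f s) := by
  let L : (Fin n → ℝ) →L[ℝ] ℝ := LinearMap.toContinuousLinearMap
    { toFun := fun x => v ⬝ᵥ (R *ᵥ x)
      map_add' := by intro x y; simp [mulVec_add, dotProduct_add]
      map_smul' := by intro c x; simp [mulVec_smul, dotProduct_smul] }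
  exact L.intervalIntegral_comp_comm (hf.intervalIntegrable a b)

lemma dot_mulVec_integral' {n : ℕ} (R : Matrix (Fin n) (Fin n) ℝ) (v : Fin n → ℝ)
    {a b : ℝ} {f : ℝ → Fin n → ℝ} (hf : Continuous f) :
    (∫ s in a..b, f s ⬝ᵥ (R *ᵥ v)) = (∫ s in a..b, f s) ⬝ᵥ (R *ᵥ v) := by
  let L : (Fin n → ℝ) →L[ℝ] ℝ := LinearMap.toContinuousLinearMap
    { toFun := fun x => x ⬝ᵥ (R *ᵥ v)
      map_add' := by intro x y; simp [add_dotProduct]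
      map_smul' := by intro c x; simp [smul_dotProduct] }
  exact L.intervalIntegral_comp_comm (hf.intervalIntegrable a b)

lemma cont_dot {n : ℕ} (R : Matrix (Fin n) (Fin n) ℝ) {f g : ℝ → Fin n → ℝ}
    (hf : Continuous f) (hg : Continuous g) :
    Continuous fun s => f s ⬝ᵥ (R *ᵥ g s) := by
  simp only [dotProduct, mulVec, dotProduct]
  exact continuous_finset_sum _ fun i _ => ((continuous_apply i).comp hf).mul
    (continuous_finset_sum _ fun j _ => continuous_const.mul ((continuous_apply j).comp hg))

lemma jensen {n : ℕ} (R : Matrix (Fin n) (Fin n) ℝ) (hR : R.PosSemidef)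
    {a b : ℝ} (hab : a ≤ b) {f : ℝ → Fin n → ℝ} (hf : Continuous f) :
    (∫ s in a..b, f s) ⬝ᵥ (R *ᵥ ∫ s in a..b, f s) ≤ (b - a) * ∫ s in a..b, f s ⬝ᵥ (R *ᵥ f s) := by
  have hnn : ∀ x : Fin n → ℝ, 0 ≤ x ⬝ᵥ (R *ᵥ x) := fun x => by
    simpa using hR.dotProduct_mulVec_nonneg x
  rcases eq_or_lt_of_le hab with rfl | hlt
  · simp
  set c := b - a with hc
  have hc0 : 0 < c := by simp [hc]; linarith
  set v := ∫ s in a..b, f s with hv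
  set I := ∫ s in a..b, f s ⬝ᵥ (R *ᵥ f s) with hI
  have hfq : Continuous fun s => f s ⬝ᵥ (R *ᵥ f s) := cont_dot R hf hf
  have hfq2 : Continuous fun s => v ⬝ᵥ (R *ᵥ f s) := cont_dot R continuous_const hf
  have hfq3 : Continuous fun s => f s ⬝ᵥ (R *ᵥ v) := cont_dot R hf continuous_const
  have key : 0 ≤ ∫ s in a..b, (c • f s - v) ⬝ᵥ (R *ᵥ (c • f s - v)) :=
    intervalIntegral.integral_nonneg hab (fun s _ => hnn _)
  have expand : ∀ s, (c • f s - v) ⬝ᵥ (R *ᵥ (c • f s - v))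
      = c^2 * (f s ⬝ᵥ (R *ᵥ f s)) - c * (v ⬝ᵥ (R *ᵥ f s)) - c * (f s ⬝ᵥ (R *ᵥ v))
        + v ⬝ᵥ (R *ᵥ v) := by
    intro s
    simp only [mulVec_sub, mulVec_smul, sub_dotProduct, dotProduct_sub,
      smul_dotProduct, dotProduct_smul, smul_eq_mul]
    ring
  rw [intervalIntegral.integral_congr (fun s _ => expand s)] at key
  have hint1 : IntervalIntegrable (fun s => c^2 * (f s ⬝ᵥ (R *ᵥ f s))) MeasureTheory.volume a b :=
    ((continuous_const.mul hfq)).intervalIntegrable a b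
  have hint2 : IntervalIntegrable (fun s => c * (v ⬝ᵥ (R *ᵥ f s))) MeasureTheory.volume a b :=
    ((continuous_const.mul hfq2)).intervalIntegrable a b
  have hint3 : IntervalIntegrable (fun s => c * (f s ⬝ᵥ (R *ᵥ v))) MeasureTheory.volume a b :=
    ((continuous_const.mul hfq3)).intervalIntegrable a b
  rw [intervalIntegral.integral_add ((hint1.sub hint2).sub hint3) (intervalIntegrable_const),
    intervalIntegral.integral_sub (hint1.sub hint2) hint3,
    intervalIntegral.integral_sub hint1 hint2,
    intervalIntegral.integral_const_mul, intervalIntegral.integral_const_mul,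
    intervalIntegral.integral_const_mul, intervalIntegral.integral_const,
    dot_mulVec_integral R v hf, dot_mulVec_integral' R v hf, ← hv, ← hI, ← hc] at key
  simp only [smul_eq_mul] at key
  have h2 : c * (v ⬝ᵥ (R *ᵥ v)) ≤ c * (c * I) := by nlinarith [key]
  have h3 := (mul_le_mul_iff_right₀ hc0).mp h2
  calc v ⬝ᵥ (R *ᵥ v) ≤ c * I := h3
    _ = (b - a) * I := by rw [hc]

/-- **Lemma 2, Jensen-type delay inequality.** For `R₁` symmetric positive
definite, `0 < d_m`, `τ ∈ [0, d_m]`, and `Z : ℝ → ℝⁿ` continuously differentiable,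
`d_m ∫_{t−d_m}^t Żᵀ R₁ Ż ds ≥ (Z(t)−Z(t−τ))ᵀR₁(Z(t)−Z(t−τ))
  + (Z(t−τ)−Z(t−d_m))ᵀR₁(Z(t−τ)−Z(t−d_m))`;
equivalently `−d_m ∫_{t−d_m}^t Żᵀ R₁ Ż ds ≤ ξᵀ M ξ` where `ξ = (Z(t), Z(t−d_m), Z(t−τ))`
and `M` is the symmetric block matrix with diagonal blocks `−R₁, −R₁, −2R₁`,
`M₁₃ = M₂₃ = R₁` and `M₁₂ = 0` (the quadratic form `ξᵀMξ` is written out below). -/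
theorem stmt3 (n : ℕ) (R1 : Matrix (Fin n) (Fin n) ℝ) (hR1 : R1.PosDef)
    (dm : ℝ) (hdm : 0 < dm) (τ : ℝ) (hτ : τ ∈ Set.Icc 0 dm) (t : ℝ)
    (Z : ℝ → (Fin n → ℝ)) (hZ : ContDiff ℝ 1 Z) :
    ((Z t - Z (t - τ)) ⬝ᵥ (R1 *ᵥ (Z t - Z (t - τ)))
        + (Z (t - τ) - Z (t - dm)) ⬝ᵥ (R1 *ᵥ (Z (t - τ) - Z (t - dm)))
      ≤ dm * ∫ s in (t - dm)..t, (deriv Z s) ⬝ᵥ (R1 *ᵥ deriv Z s)) ∧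
    (-(dm * ∫ s in (t - dm)..t, (deriv Z s) ⬝ᵥ (R1 *ᵥ deriv Z s))
      ≤ -(Z t ⬝ᵥ (R1 *ᵥ Z t)) - Z (t - dm) ⬝ᵥ (R1 *ᵥ Z (t - dm))
          - 2 * (Z (t - τ) ⬝ᵥ (R1 *ᵥ Z (t - τ)))
          + 2 * (Z t ⬝ᵥ (R1 *ᵥ Z (t - τ)))
          + 2 * (Z (t - dm) ⬝ᵥ (R1 *ᵥ Z (t - τ)))) := by
  obtain ⟨hτ0, hτdm⟩ := hτ
  have hg : Continuous (deriv Z) := hZ.continuous_deriv le_rfl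
  have hgq : Continuous fun s => deriv Z s ⬝ᵥ (R1 *ᵥ deriv Z s) := cont_dot R1 hg hg
  have hnn : ∀ x : Fin n → ℝ, 0 ≤ x ⬝ᵥ (R1 *ᵥ x) := fun x => by
    simpa using hR1.posSemidef.dotProduct_mulVec_nonneg x
  have ftc : ∀ a b : ℝ, (∫ s in a..b, deriv Z s) = Z b - Z a := fun a b =>
    intervalIntegral.integral_deriv_eq_sub (fun x _ => (hZ.differentiable one_ne_zero) x)
      (hg.intervalIntegrable a b)
  -- split integral
  have hsplit : (∫ s in (t - dm)..(t - τ), deriv Z s ⬝ᵥ (R1 *ᵥ deriv Z s))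
      + (∫ s in (t - τ)..t, deriv Z s ⬝ᵥ (R1 *ᵥ deriv Z s))
      = ∫ s in (t - dm)..t, deriv Z s ⬝ᵥ (R1 *ᵥ deriv Z s) :=
    intervalIntegral.integral_add_adjacent_intervals (hgq.intervalIntegrable _ _)
      (hgq.intervalIntegrable _ _)
  have hI1 : 0 ≤ ∫ s in (t - τ)..t, deriv Z s ⬝ᵥ (R1 *ᵥ deriv Z s) :=
    intervalIntegral.integral_nonneg (by linarith) (fun s _ => hnn _)
  have hI2 : 0 ≤ ∫ s in (t - dm)..(t - τ), deriv Z s ⬝ᵥ (R1 *ᵥ deriv Z s) :=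
    intervalIntegral.integral_nonneg (by linarith) (fun s _ => hnn _)
  have h1 := jensen R1 hR1.posSemidef (show t - τ ≤ t by linarith) hg
  have h2 := jensen R1 hR1.posSemidef (show t - dm ≤ t - τ by linarith) hg
  rw [ftc] at h1 h2
  have hτ1 : (t - (t - τ)) = τ := by ring
  have hτ2 : (t - τ - (t - dm)) = dm - τ := by ring
  rw [hτ1] at h1
  rw [hτ2] at h2
  have part1 : (Z t - Z (t - τ)) ⬝ᵥ (R1 *ᵥ (Z t - Z (t - τ)))
        + (Z (t - τ) - Z (t - dm)) ⬝ᵥ (R1 *ᵥ (Z (t - τ) - Z (t - dm)))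
      ≤ dm * ∫ s in (t - dm)..t, (deriv Z s) ⬝ᵥ (R1 *ᵥ deriv Z s) := by
    have b1 : τ * (∫ s in (t - τ)..t, deriv Z s ⬝ᵥ (R1 *ᵥ deriv Z s))
        ≤ dm * (∫ s in (t - τ)..t, deriv Z s ⬝ᵥ (R1 *ᵥ deriv Z s)) := by nlinarith
    have b2 : (dm - τ) * (∫ s in (t - dm)..(t - τ), deriv Z s ⬝ᵥ (R1 *ᵥ deriv Z s))
        ≤ dm * (∫ s in (t - dm)..(t - τ), deriv Z s ⬝ᵥ (R1 *ᵥ deriv Z s)) := by nlinarith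
    rw [← hsplit]; ring_nf; ring_nf at h1 h2 b1 b2 ⊢; linarith
  refine ⟨part1, ?_⟩
  have ht : R1ᵀ = R1 := by
    have := hR1.isHermitian.eq
    simpa [Matrix.conjTranspose, Matrix.map, Matrix.transpose] using this
  have hsym : ∀ x y : Fin n → ℝ, x ⬝ᵥ (R1 *ᵥ y) = y ⬝ᵥ (R1 *ᵥ x) := by
    intro x y
    rw [dotProduct_mulVec, ← ht, vecMul_transpose, ht, dotProduct_comm]
  have hexp : (Z t - Z (t - τ)) ⬝ᵥ (R1 *ᵥ (Z t - Z (t - τ)))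
        + (Z (t - τ) - Z (t - dm)) ⬝ᵥ (R1 *ᵥ (Z (t - τ) - Z (t - dm)))
      = (Z t ⬝ᵥ (R1 *ᵥ Z t)) + Z (t - dm) ⬝ᵥ (R1 *ᵥ Z (t - dm))
          + 2 * (Z (t - τ) ⬝ᵥ (R1 *ᵥ Z (t - τ)))
          - 2 * (Z t ⬝ᵥ (R1 *ᵥ Z (t - τ)))
          - 2 * (Z (t - dm) ⬝ᵥ (R1 *ᵥ Z (t - τ))) := by
    simp only [mulVec_sub, sub_dotProduct, dotProduct_sub]
    rw [hsym (Z (t - τ)) (Z t), hsym (Z (t - τ)) (Z (t - dm))]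
    ring
  linarith [part1, hexp.symm.le]
end

section
/- Consider N agents with matrices A_i ∈ ℝ^{n_i×n_i}, B_i ∈ ℝ^{n_i×p_i}, C_i ∈ ℝ^{q×n_i}, gains K_i, and matrices U_i, W_i, X_i satisfying the regulator equations B_iU_i = A_iX_i, B_iW_i = X_i, C_iX_i = I_q; let A, B, C, K, U, W, X denote the block-diagonal aggregations and suppose A − BK is invertible. Let L ∈ ℝ^{N×N} be a Laplacian matrix with L·1_N = 0, 1_Nᵀ L = 0, and kernel exactly span{1_N}; set L̃ = L ⊗ I_q. Let f_i : ℝ^q → ℝ be differentiable and strongly convex, let α, β > 0, and let ∇f̃(y) = col(∇f₁(y₁),…,∇f_N(y_N)) for y = col(y₁,…,y_N). Suppose (x̄, η̄, z̄) satisfies the equilibrium equations: (A − BK)x̄ − B(U − KX)η̄ = 0, 0 = −∇f̃(ȳ) − αβ L̃ ȳ − β L̃ (η̄ + z̄), and αβ L̃ ȳ = 0, where ȳ = C x̄. Then x̄ = X η̄, ȳ = η̄, there is y* ∈ ℝ^q with ȳ = 1_N ⊗ y*, Σ_{i=1}^N ∇f_i(y*) = 0, and y* is the unique global minimizer of F(θ)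 = Σ_{i=1}^N f_i(θ). -/
open Matrix
open scoped RealInnerProductSpace

private lemma euclid_comp {a b c : ℕ} (M : Matrix (Fin a) (Fin b) ℝ)
    (N : Matrix (Fin b) (Fin c) ℝ) (v : EuclideanSpace ℝ (Fin c)) :
    Matrix.toEuclideanLin (M * N) v = Matrix.toEuclideanLin M (Matrix.toEuclideanLin N v) := by
  simp [Matrix.toEuclideanLin_apply, Matrix.mulVec_mulVec]

private lemma euclid_one {a : ℕ} (v : EuclideanSpace ℝ (Fin a)) :
    Matrix.toEuclideanLin (1 : Matrix (Fin a) (Fin a) ℝ) v = v := by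
  simp [Matrix.toEuclideanLin_apply]

private lemma sum_smul_apply {Nn q : ℕ} (c : Fin Nn → ℝ)
    (y : Fin Nn → EuclideanSpace ℝ (Fin q)) (k : Fin q) :
    (∑ j, c j • y j) k = ∑ j, c j * y j k := by
  have h : (∑ j, c j • y j) k = EuclideanSpace.proj (𝕜 := ℝ) k (∑ j, c j • y j) := rfl
  rw [h, map_sum]
  exact Finset.sum_congr rfl fun j _ => by simp [EuclideanSpace.proj]

private lemma strong_lb {E : Type*} [NormedAddCommGroup E] [InnerProductSpace ℝ E]
    [CompleteSpace E]
    (f : E → ℝ) (hf : Differentiable ℝ f) (m : ℝ)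
    (h : ∀ u w : E, m * ‖u - w‖ ^ 2 ≤ ⟪gradient f u - gradient f w, u - w⟫)
    (u w : E) :
    f u + ⟪gradient f u, w - u⟫ + m / 2 * ‖w - u‖ ^ 2 ≤ f w := by
  set d := w - u with hd
  set G : ℝ := ⟪gradient f u, d⟫ with hG
  set g : ℝ → ℝ := fun t => f (u + t • d) - t * G - m / 2 * ‖d‖ ^ 2 * t ^ 2 with hgdef
  have hder : ∀ t : ℝ, HasDerivAt g
      (⟪gradient f (u + t • d), d⟫ - G - m / 2 * ‖d‖ ^ 2 * (2 * t)) t := by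
    intro t
    have hc : HasDerivAt (fun s : ℝ => u + s • d) d t := by
      simpa using ((hasDerivAt_id t).smul_const d).const_add u
    have h1 : HasDerivAt (fun s : ℝ => f (u + s • d)) ⟪gradient f (u + t • d), d⟫ t := by
      have := ((hf (u + t • d)).hasGradientAt.hasFDerivAt).comp_hasDerivAt t hc
      simpa [InnerProductSpace.toDual_apply_apply, Function.comp_def] using this
    have h2 : HasDerivAt (fun s : ℝ => s * G) G t := by
      simpa using (hasDerivAt_id t).mul_const G
    have h3 : HasDerivAt (fun s : ℝ => m / 2 * ‖d‖ ^ 2 * s ^ 2)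
        (m / 2 * ‖d‖ ^ 2 * (2 * t)) t := by
      have := ((hasDerivAt_pow 2 t)).const_mul (m / 2 * ‖d‖ ^ 2)
      exact this.congr_deriv (by push_cast; ring)
    exact (h1.sub h2).sub h3
  have hmono : MonotoneOn g (Set.Icc (0:ℝ) 1) := by
    apply monotoneOn_of_deriv_nonneg (convex_Icc 0 1)
    · exact fun t _ => ((hder t).continuousAt).continuousWithinAt
    · intro t ht
      exact ((hder t).differentiableAt).differentiableWithinAt
    · intro t ht
      rw [interior_Icc] at ht
      rw [(hder t).deriv]
      have key := h (u + t • d) u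
      have e1 : u + t • d - u = t • d := by abel
      rw [e1] at key
      have e2 : ⟪gradient f (u + t • d) - gradient f u, t • d⟫
          = t * (⟪gradient f (u + t • d), d⟫ - G) := by
        rw [real_inner_smul_right, inner_sub_left]; try ring
      have e3 : ‖t • d‖ ^ 2 = t ^ 2 * ‖d‖ ^ 2 := by
        rw [norm_smul]; simp [mul_pow, sq_abs]
      rw [e2, e3] at key
      have ht0 : 0 < t := ht.1
      nlinarith [key]
  have h01 := hmono (Set.left_mem_Icc.2 zero_le_one) (Set.right_mem_Icc.2 zero_le_one) zero_le_one
  have g0 : g 0 = f u := by simp [hgdef]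
  have g1 : g 1 = f w - G - m / 2 * ‖d‖ ^ 2 := by simp [hgdef, hd]
  rw [g0, g1] at h01
  linarith

/-- **equilibrium points are optimal.**  For `N` heterogeneous agents with
regulator equations `B_iU_i = A_iX_i`, `B_iW_i = X_i`, `C_iX_i = I_q`, invertible
`A − BK` (blockwise), a Laplacian `L` with `L1 = 0`, `1ᵀL = 0` and kernel exactly
`span{1}`, and differentiable strongly convex local costs `f_i`: any equilibrium
`(x̄, η̄, z̄)` of the closed loop (written blockwise, with `ȳ = Cx̄`) satisfies
`x̄ = Xη̄`, `ȳ = η̄`, `ȳ = 1_N ⊗ y*` with `Σ_i ∇f_i(y*) = 0`, and `y*` is the unique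
global minimizer of `F = Σ_i f_i`. -/
theorem stmt5 (N q : ℕ) (hN : 0 < N)
    (n p : Fin N → ℕ)
    (A : ∀ i, Matrix (Fin (n i)) (Fin (n i)) ℝ)
    (B : ∀ i, Matrix (Fin (n i)) (Fin (p i)) ℝ)
    (C : ∀ i, Matrix (Fin q) (Fin (n i)) ℝ)
    (K : ∀ i, Matrix (Fin (p i)) (Fin (n i)) ℝ)
    (U W : ∀ i, Matrix (Fin (p i)) (Fin q) ℝ)
    (X : ∀ i, Matrix (Fin (n i)) (Fin q) ℝ)
    (hreg1 : ∀ i, B i * U i = A i * X i)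
    (hreg2 : ∀ i, B i * W i = X i)
    (hreg3 : ∀ i, C i * X i = 1)
    (hinv : ∀ i, IsUnit (A i - B i * K i))
    (L : Matrix (Fin N) (Fin N) ℝ)
    (hL1 : L *ᵥ (fun _ => (1 : ℝ)) = 0)
    (h1L : (fun _ => (1 : ℝ)) ᵥ* L = 0)
    (hker : ∀ v : Fin N → ℝ, L *ᵥ v = 0 → ∃ cc : ℝ, v = fun _ => cc)
    (f : Fin N → EuclideanSpace ℝ (Fin q) → ℝ)
    (hdiff : ∀ i, Differentiable ℝ (f i))
    (hconv : ∀ i, ∃ m : ℝ, 0 < m ∧ ∀ u w : EuclideanSpace ℝ (Fin q),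
      m * ‖u - w‖ ^ 2 ≤ ⟪gradient (f i) u - gradient (f i) w, u - w⟫)
    (αg βg : ℝ) (hα : 0 < αg) (hβ : 0 < βg)
    (xbar : ∀ i, EuclideanSpace ℝ (Fin (n i)))
    (ηbar zbar ybar : Fin N → EuclideanSpace ℝ (Fin q))
    (hy : ∀ i, ybar i = Matrix.toEuclideanLin (C i) (xbar i))
    (heq1 : ∀ i, Matrix.toEuclideanLin (A i - B i * K i) (xbar i)
        - Matrix.toEuclideanLin (B i * (U i - K i * X i)) (ηbar i) = 0)
    (heq2 : ∀ i, (0 : EuclideanSpace ℝ (Fin q))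
        = -gradient (f i) (ybar i) - (αg * βg) • (∑ j, L i j • ybar j)
          - βg • (∑ j, L i j • (ηbar j + zbar j)))
    (heq3 : ∀ i, (αg * βg) • (∑ j, L i j • ybar j) = 0) :
    (∀ i, xbar i = Matrix.toEuclideanLin (X i) (ηbar i)) ∧
    (∀ i, ybar i = ηbar i) ∧
    ∃ ystar : EuclideanSpace ℝ (Fin q),
      (∀ i, ybar i = ystar) ∧
      (∑ i, gradient (f i) ystar = 0) ∧
      (∀ θ, ∑ i, f i ystar ≤ ∑ i, f i θ) ∧
      (∀ θ, (∀ θ', ∑ i, f i θ ≤ ∑ i, f i θ') → θ = ystar) := by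
  -- Part 1 : x̄ = X η̄
  have hxX : ∀ i, xbar i = Matrix.toEuclideanLin (X i) (ηbar i) := by
    intro i
    have hBU : B i * (U i - K i * X i) = (A i - B i * K i) * X i := by
      rw [Matrix.mul_sub, Matrix.sub_mul, hreg1 i, Matrix.mul_assoc]
    have h0 := heq1 i
    rw [sub_eq_zero, hBU, euclid_comp] at h0
    have hdet : IsUnit (A i - B i * K i).det :=
      (Matrix.isUnit_iff_isUnit_det _).mp (hinv i)
    have hinj := congrArg (Matrix.toEuclideanLin (A i - B i * K i)⁻¹) h0
    rw [← euclid_comp, ← euclid_comp, Matrix.nonsing_inv_mul _ hdet,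
      euclid_one, euclid_one] at hinj
    exact hinj
  refine ⟨hxX, ?_, ?_⟩
  -- Part 2 : ȳ = η̄
  have hyeta : ∀ i, ybar i = ηbar i := by
    intro i
    rw [hy i, hxX i, ← euclid_comp, hreg3 i, euclid_one]
  · exact hyeta
  -- sums vanish
  have hαβ : αg * βg ≠ 0 := ne_of_gt (mul_pos hα hβ)
  have hsum0 : ∀ i, (∑ j, L i j • ybar j) = 0 := by
    intro i
    have := heq3 i
    rcases smul_eq_zero.mp this with h | h
    · exact absurd h hαβ
    · exact h
  -- Part 3 : ȳ is consensual
  set i0 : Fin N := ⟨0, hN⟩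
  set ystar : EuclideanSpace ℝ (Fin q) := ybar i0 with hys
  have hconst : ∀ i, ybar i = ystar := by
    intro i
    ext k
    obtain ⟨cc, hcc⟩ : ∃ cc : ℝ, (fun j => ybar j k) = fun _ => cc := by
      apply hker
      funext i'
      have := congrArg (fun v : EuclideanSpace ℝ (Fin q) => v k) (hsum0 i')
      simpa [Matrix.mulVec, dotProduct, sum_smul_apply] using this
    calc ybar i k = cc := congrFun hcc i
    _ = ybar i0 k := (congrFun hcc i0).symm
  refine ⟨ystar, hconst, ?_⟩
  -- gradient identities
  have hgrad : ∀ i, gradient (f i) ystar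
      = -(βg • (∑ j, L i j • (ηbar j + zbar j))) := by
    intro i
    have h2 := (heq2 i).symm
    rw [heq3 i, sub_zero, hconst i, sub_eq_zero] at h2
    exact neg_eq_iff_eq_neg.mp h2
  -- sum of gradients is zero
  have hcol : ∀ j, (∑ i, L i j) = 0 := by
    intro j
    have := congrFun h1L j
    simpa [Matrix.vecMul, dotProduct] using this
  have hgsum : (∑ i, gradient (f i) ystar) = 0 := by
    have : (∑ i, gradient (f i) ystar)
        = -(βg • ∑ i, ∑ j, L i j • (ηbar j + zbar j)) := by
      rw [Finset.smul_sum]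
      rw [← Finset.sum_neg_distrib]
      exact Finset.sum_congr rfl fun i _ => by rw [hgrad i, Finset.smul_sum]
    rw [this, Finset.sum_comm]
    have hz : (∑ j, ∑ i, L i j • (ηbar j + zbar j)) = 0 :=
      Finset.sum_eq_zero fun j _ => by rw [← Finset.sum_smul, hcol j, zero_smul]
    rw [hz, smul_zero, neg_zero]
  refine ⟨hgsum, ?_⟩
  -- choose strong convexity constants
  obtain ⟨m, hm, hmin⟩ : ∃ m : Fin N → ℝ, (∀ i, 0 < m i) ∧
      ∀ i, ∀ u w : EuclideanSpace ℝ (Fin q),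
        m i * ‖u - w‖ ^ 2 ≤ ⟪gradient (f i) u - gradient (f i) w, u - w⟫ := by
    choose m hm hmin using hconv
    exact ⟨m, hm, hmin⟩
  have hlb : ∀ (i : Fin N) (θ : EuclideanSpace ℝ (Fin q)),
      f i ystar + ⟪gradient (f i) ystar, θ - ystar⟫ + m i / 2 * ‖θ - ystar‖ ^ 2 ≤ f i θ :=
    fun i θ => strong_lb (f i) (hdiff i) (m i) (hmin i) ystar θ
  have hsumlb : ∀ θ : EuclideanSpace ℝ (Fin q),
      (∑ i, f i ystar) + (∑ i, m i) / 2 * ‖θ - ystar‖ ^ 2 ≤ ∑ i, f i θ := by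
    intro θ
    have hs := Finset.sum_le_sum (fun i (_ : i ∈ Finset.univ) => hlb i θ)
    rw [Finset.sum_add_distrib, Finset.sum_add_distrib] at hs
    have hin : (∑ i, ⟪gradient (f i) ystar, θ - ystar⟫) = 0 := by
      rw [← sum_inner, hgsum, inner_zero_left]
    rw [hin, add_zero] at hs
    calc (∑ i, f i ystar) + (∑ i, m i) / 2 * ‖θ - ystar‖ ^ 2
        = (∑ i, f i ystar) + ∑ i, m i / 2 * ‖θ - ystar‖ ^ 2 := by
          congr 1
          rw [← Finset.sum_mul, ← Finset.sum_div]
      _ ≤ ∑ i, f i θ := hs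
  have hmpos : 0 < ∑ i, m i :=
    Finset.sum_pos (fun i _ => hm i) ⟨i0, Finset.mem_univ i0⟩
  refine ⟨fun θ => ?_, ?_⟩
  · 
    have := hsumlb θ
    nlinarith [sq_nonneg ‖θ - ystar‖]
  · intro θ hθ
    have h1 := hθ ystar
    have h2 := hsumlb θ
    have hn : ‖θ - ystar‖ ^ 2 ≤ 0 := by nlinarith
    have : θ - ystar = 0 := by
      have := le_antisymm hn (sq_nonneg _)
      have h0 : ‖θ - ystar‖ = 0 := by nlinarith [norm_nonneg (θ - ystar)]
      exact norm_eq_zero.mp h0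
    exact sub_eq_zero.mp this
end
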